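/- Every 2×2 integer matrix A with det A ≠ 0 belongs to the submonoid of the multiplicative monoid of 2×2 integer matrices generated by the matrices of determinant 1 or −1 together with the diagonal matrices diag(1, p) for p a prime number. -/

import Mathlib

open Matrix

lemma key (p : ℕ) (hp : p.Prime) (A : Matrix (Fin 2) (Fin 2) ℤ)
    (hdvd : (p : ℤ) ∣ A.det) :
    ∃ C V : Matrix (Fin 2) (Fin 2) ℤ, (V.det = 1 ∨ V.det = -1) ∧
      A = C * Matrix.diagonal ![1, (p : ℤ)] * V ∧
      A.det.natAbs = C.det.natAbs * p := by
  haveI : Fact p.Prime := ⟨hp⟩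
  set a := A 0 0 with ha'
  set b := A 0 1 with hb'
  set c := A 1 0 with hc'
  set d := A 1 1 with hd'
  have hAeta : A = !![a, b; c, d] := Matrix.eta_fin_two A
  have hdet : A.det = a * d - b * c := by rw [hAeta]; simp [Matrix.det_fin_two_of]
  have hD : Matrix.diagonal ![1, (p:ℤ)] = !![1, 0; 0, (p:ℤ)] := by
    ext i j; fin_cases i <;> fin_cases j <;> simp [Matrix.diagonal]
  have hdet0 : ((A.det : ZMod p)) = 0 := by
    rwa [ZMod.intCast_zmod_eq_zero_iff_dvd]
  have hdet0' : ((a : ZMod p) * d - b * c) = 0 := by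
    have := hdet0; rw [hdet] at this; push_cast at this; exact this
  by_cases hpa : (p : ℤ) ∣ a
  · by_cases hpc : (p : ℤ) ∣ c
    · -- first column divisible by p
      obtain ⟨e, he⟩ := hpa
      obtain ⟨f, hf⟩ := hpc
      refine ⟨!![e, b; f, d] * !![0, 1; 1, 0], !![0, 1; 1, 0], ?_, ?_, ?_⟩
      · right; simp [Matrix.det_fin_two_of]
      · rw [hAeta, hD, Matrix.mul_assoc, Matrix.mul_assoc, Matrix.mul_fin_two,
          Matrix.mul_fin_two, Matrix.mul_fin_two]
        congr 1 <;> ring_nf <;> rw [he, hf] <;> ring_nf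
      · have : A.det = (!![e, b; f, d] * !![0, 1; 1, 0]).det * p * (-1) := by
          rw [hdet]; simp [Matrix.det_fin_two_of, he, hf]; ring
        rw [this]; simp [Int.natAbs_mul]
    · -- p ∤ c : t with c*t ≡ -d, and p ∣ b
      have hc0 : (c : ZMod p) ≠ 0 := fun h => hpc ((ZMod.intCast_zmod_eq_zero_iff_dvd c p).mp h)
      obtain ⟨t, ht⟩ := ZMod.intCast_surjective (-(d : ZMod p) * (c : ZMod p)⁻¹)
      have h1 : (p : ℤ) ∣ b + t * a := by
        rw [← ZMod.intCast_zmod_eq_zero_iff_dvd]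
        push_cast
        have hb0 : (b : ZMod p) = 0 := by
          have ha0 : (a : ZMod p) = 0 := (ZMod.intCast_zmod_eq_zero_iff_dvd a p).mpr hpa
          have hbc : (b : ZMod p) * c = 0 := by
            rw [ha0] at hdet0'; linear_combination -hdet0'
          rcases mul_eq_zero.mp hbc with h | h
          · exact h
          · exact absurd h hc0
        have ha0 : (a : ZMod p) = 0 := (ZMod.intCast_zmod_eq_zero_iff_dvd a p).mpr hpa
        rw [hb0, ha0]; ring
      have h2 : (p : ℤ) ∣ d + t * c := by
        rw [← ZMod.intCast_zmod_eq_zero_iff_dvd]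
        push_cast
        rw [ht]; field_simp; ring
      obtain ⟨e, he⟩ := h1
      obtain ⟨f, hf⟩ := h2
      refine ⟨!![a, e; c, f], !![1, -t; 0, 1], ?_, ?_, ?_⟩
      · left; simp [Matrix.det_fin_two_of]
      · rw [hAeta, hD, Matrix.mul_assoc, Matrix.mul_fin_two, Matrix.mul_fin_two]
        have hb : b = p * e - t * a := by linarith
        have hd2 : d = p * f - t * c := by linarith
        congr 1 <;> ring_nf <;> rw [hb, hd2] <;> ring_nf
      · have : A.det = (!![a, e; c, f]).det * p * 1 := by
          rw [hdet]
          have hb : b = p * e - t * a := by linarith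
          have hd2 : d = p * f - t * c := by linarith
          simp [Matrix.det_fin_two_of, hb, hd2]; ring
        rw [this]; simp [Int.natAbs_mul]
  · -- p ∤ a : t with a*t ≡ -b
    have ha0 : (a : ZMod p) ≠ 0 := fun h => hpa ((ZMod.intCast_zmod_eq_zero_iff_dvd a p).mp h)
    obtain ⟨t, ht⟩ := ZMod.intCast_surjective (-(b : ZMod p) * (a : ZMod p)⁻¹)
    have h1 : (p : ℤ) ∣ b + t * a := by
      rw [← ZMod.intCast_zmod_eq_zero_iff_dvd]; push_cast; rw [ht]; field_simp; ring
    have h2 : (p : ℤ) ∣ d + t * c := by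
      rw [← ZMod.intCast_zmod_eq_zero_iff_dvd]; push_cast; rw [ht]
      have hinv := mul_inv_cancel₀ ha0
      linear_combination ((a : ZMod p))⁻¹ * hdet0' - (d : ZMod p) * hinv
    obtain ⟨e, he⟩ := h1
    obtain ⟨f, hf⟩ := h2
    refine ⟨!![a, e; c, f], !![1, -t; 0, 1], ?_, ?_, ?_⟩
    · left; simp [Matrix.det_fin_two_of]
    · rw [hAeta, hD, Matrix.mul_assoc, Matrix.mul_fin_two, Matrix.mul_fin_two]
      have hb : b = p * e - t * a := by linarith
      have hd2 : d = p * f - t * c := by linarith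
      congr 1 <;> ring_nf <;> rw [hb, hd2] <;> ring_nf
    · have : A.det = (!![a, e; c, f]).det * p * 1 := by
        rw [hdet]
        have hb : b = p * e - t * a := by linarith
        have hd2 : d = p * f - t * c := by linarith
        simp [Matrix.det_fin_two_of, hb, hd2]; ring
      rw [this]; simp [Int.natAbs_mul]

/-- Every 2×2 integer matrix with nonzero determinant lies in the submonoid of
the multiplicative monoid of 2×2 integer matrices generated by the matrices of
determinant `1` or `-1` together with the diagonal matrices `diag(1, p)` for
`p` a prime number. -/
theorem matrix_mem_closure_units_and_diag_primes
    (A : Matrix (Fin 2) (Fin 2) ℤ) (hA : A.det ≠ 0) :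
    A ∈ Submonoid.closure
      ({B : Matrix (Fin 2) (Fin 2) ℤ | B.det = 1 ∨ B.det = -1} ∪
        {B : Matrix (Fin 2) (Fin 2) ℤ |
          ∃ p : ℕ, Nat.Prime p ∧ B = Matrix.diagonal ![1, (p : ℤ)]}) := by
  set S := ({B : Matrix (Fin 2) (Fin 2) ℤ | B.det = 1 ∨ B.det = -1} ∪
        {B : Matrix (Fin 2) (Fin 2) ℤ |
          ∃ p : ℕ, Nat.Prime p ∧ B = Matrix.diagonal ![1, (p : ℤ)]}) with hS
  obtain ⟨n, hn⟩ : ∃ n, A.det.natAbs = n := ⟨_, rfl⟩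
  induction n using Nat.strong_induction_on generalizing A with
  | _ n ih =>
    by_cases h1 : A.det = 1 ∨ A.det = -1
    · exact Submonoid.subset_closure (Or.inl h1)
    · have hne1 : n ≠ 1 := by
        intro h; rw [h] at hn
        exact h1 ((Int.natAbs_eq_iff.mp hn).imp id id)
      obtain ⟨p, hp, hpn⟩ := Nat.exists_prime_and_dvd hne1
      have hpdvd : (p : ℤ) ∣ A.det := by
        have : (p:ℤ) ∣ (A.det.natAbs : ℤ) := Int.natCast_dvd_natCast.mpr (hn ▸ hpn)
        exact this.trans (Int.natAbs_dvd.mpr dvd_rfl)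
      obtain ⟨C, V, hV, hAF, hdetabs⟩ := key p hp A hpdvd
      have hn0 : n ≠ 0 := fun h => hA (Int.natAbs_eq_zero.mp (hn.trans h))
      have hC0 : C.det ≠ 0 := by
        intro h
        rw [hn, h] at hdetabs; simp at hdetabs; exact hn0 hdetabs
      have hlt : C.det.natAbs < n := by
        rw [hn] at hdetabs
        have hp2 := hp.two_le
        have : C.det.natAbs ≠ 0 := fun h => hC0 (Int.natAbs_eq_zero.mp h)
        have h2' : 1 ≤ C.det.natAbs := Nat.one_le_iff_ne_zero.mpr this
        calc C.det.natAbs < C.det.natAbs * 2 := by omega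
          _ ≤ C.det.natAbs * p := Nat.mul_le_mul_left _ hp2
          _ = n := hdetabs.symm
      have hCmem := ih _ hlt C hC0 rfl
      rw [hAF]
      refine mul_mem (mul_mem hCmem ?_) (Submonoid.subset_closure (Or.inl hV))
      exact Submonoid.subset_closure (Or.inr ⟨p, hp, rfl⟩)
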